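/- arXiv:2308.16613 — 3 statements merged into one kernel-verified Lean document; each statement's English description precedes it below -/
import Mathlib

section
/- For nonnegative integers j and an entire function f on ℂ of at most exponential type (i.e., |f(z)| ≤ C e^{c|z|} for some constants), one has (1/π) ∫_ℂ conj(z)^j f(z) e^{conj(z)·ζ + z·conj(ζ) - |z|²} dV(z) = ∂_ζ^j [f(ζ) e^{|ζ|²}] for every ζ ∈ ℂ. -/
open MeasureTheory Complex ComplexConjugate
open Finset intervalIntegral Real Set

lemma pow_le_fact_exp (x : ℝ) (hx : 0 ≤ x) (k : ℕ) : x ^ k ≤ k.factorial * Real.exp x := by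
  have h1 : x ^ k / k.factorial ≤ ∑ i ∈ range (k+1), x ^ i / i.factorial := by
    refine Finset.single_le_sum (f := fun i => x ^ i / (i.factorial : ℝ)) ?_ (self_mem_range_succ k)
    intro i _
    positivity
  have h2 := Real.sum_le_exp_of_nonneg hx (k+1)
  have hk : (0:ℝ) < k.factorial := by positivity
  rw [div_le_iff₀ hk] at *
  nlinarith [h1, h2, Real.exp_pos x]

lemma Fbound (h : ℂ → ℂ) (C c : ℝ) (hC : 0 ≤ C)
    (hb : ∀ z : ℂ, ‖h z‖ ≤ C * Real.exp (c * ‖z‖)) (k : ℕ) (w : ℂ) :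
    ‖(conj w) ^ k * h w * Complex.exp (-(‖w‖:ℂ) ^ 2)‖
      ≤ (C * k.factorial * Real.exp ((c+1)^2/2)) * Real.exp (-(1/2) * ‖w‖^2) := by
  have hr : (0:ℝ) ≤ ‖w‖ := norm_nonneg w
  set r := ‖w‖ with hrdef
  have hnorm : ‖(conj w) ^ k * h w * Complex.exp (-(‖w‖:ℂ) ^ 2)‖
      = r ^ k * ‖h w‖ * Real.exp (-r^2) := by
    rw [norm_mul, norm_mul, norm_pow]
    have : ‖(conj w)‖ = r := by simp [hrdef]
    rw [this]
    congr 1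
    rw [Complex.norm_exp]
    congr 1
    simp [hrdef, ← Complex.ofReal_pow]
  rw [hnorm]
  have h1 : ‖h w‖ ≤ C * Real.exp (c * r) := hb w
  have h2 : r ^ k ≤ k.factorial * Real.exp r := pow_le_fact_exp r hr k
  have h3 : c * r + r ≤ r^2/2 + (c+1)^2/2 := by nlinarith [sq_nonneg (r - (c+1))]
  calc r ^ k * ‖h w‖ * Real.exp (-r^2)
      ≤ (k.factorial * Real.exp r) * (C * Real.exp (c * r)) * Real.exp (-r^2) := by
        apply mul_le_mul_of_nonneg_right _ (Real.exp_pos _).le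
        apply mul_le_mul h2 h1 (norm_nonneg _)
        positivity
    _ = C * k.factorial * Real.exp (c * r + r + -r^2) := by
        rw [Real.exp_add, Real.exp_add]; ring
    _ ≤ C * k.factorial * Real.exp ((c+1)^2/2 + -(1/2) * r^2) := by
        apply mul_le_mul_of_nonneg_left _ (by positivity)
        apply Real.exp_le_exp.2
        nlinarith
    _ = C * k.factorial * Real.exp ((c+1)^2/2) * Real.exp (-(1/2) * r^2) := by
        rw [Real.exp_add]; ring

lemma key_integrable (h : ℂ → ℂ) (hc : Continuous h) (C c : ℝ)
    (hb : ∀ z : ℂ, ‖h z‖ ≤ C * Real.exp (c * ‖z‖)) (k : ℕ) :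
    Integrable (fun w : ℂ => (conj w) ^ k * h w * Complex.exp (-(‖w‖:ℂ) ^ 2)) := by
  have hC : 0 ≤ C := by
    have := hb 0
    simp at this
    exact le_trans (norm_nonneg _) this
  have hint : Integrable (fun w : ℂ => Complex.exp (-(1/2 : ℂ) * ‖w‖^2 + 0 * (inner ℝ (0:ℂ) w : ℝ))) :=
    GaussianFourier.integrable_cexp_neg_mul_sq_norm_add (by norm_num) 0 0
  have hint2 : Integrable (fun w : ℂ =>
      (C * k.factorial * Real.exp ((c+1)^2/2)) * Real.exp (-(1/2) * ‖w‖^2)) := by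
    refine ((hint.norm).congr (Filter.Eventually.of_forall fun w => ?_)).const_mul _
    show ‖cexp (-(1 / 2) * (‖w‖:ℂ) ^ 2 + 0 * ((inner ℝ (0:ℂ) w : ℝ):ℂ))‖ = _
    rw [Complex.norm_exp]
    congr 1
    simp [← Complex.ofReal_pow]
  refine Integrable.mono' hint2 ?_ ?_
  · apply Continuous.aestronglyMeasurable
    continuity
  · exact Filter.Eventually.of_forall fun w => Fbound h C c hC hb k w

lemma leibniz_exp (f : ℂ → ℂ) (hf : Differentiable ℂ f) (c : ℂ) (j : ℕ) :
    ∀ ζ : ℂ, iteratedDeriv j (fun ξ : ℂ => f ξ * Complex.exp (ξ * c)) ζ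
      = (∑ k ∈ Finset.range (j+1), (j.choose k : ℂ) * iteratedDeriv k f ζ * c ^ (j - k))
          * Complex.exp (ζ * c) := by
  have hcd : ContDiff ℂ ⊤ f := hf.contDiff
  have hdk : ∀ k, Differentiable ℂ (iteratedDeriv k f) := fun k =>
    hcd.differentiable_iteratedDeriv k (by simp [lt_top_iff_ne_top])
  induction j with
  | zero => intro ζ; simp [iteratedDeriv_zero]
  | succ j ih =>
    intro ζ
    rw [iteratedDeriv_succ]
    have : deriv (iteratedDeriv j fun ξ : ℂ => f ξ * Complex.exp (ξ * c)) ζ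
        = deriv (fun ζ : ℂ => (∑ k ∈ Finset.range (j+1),
            (j.choose k : ℂ) * iteratedDeriv k f ζ * c ^ (j - k)) * Complex.exp (ζ * c)) ζ := by
      apply Filter.EventuallyEq.deriv_eq
      exact Filter.Eventually.of_forall ih
    rw [this]
    have hS : ∀ ζ : ℂ, HasDerivAt (fun ζ : ℂ => ∑ k ∈ Finset.range (j+1),
        (j.choose k : ℂ) * iteratedDeriv k f ζ * c ^ (j - k))
        (∑ k ∈ Finset.range (j+1),
          (j.choose k : ℂ) * iteratedDeriv (k+1) f ζ * c ^ (j - k)) ζ := by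
      intro ζ
      apply HasDerivAt.fun_sum
      intro k hk
      have h1 : HasDerivAt (iteratedDeriv k f) (iteratedDeriv (k+1) f ζ) ζ := by
        rw [iteratedDeriv_succ]
        exact ((hdk k).differentiableAt).hasDerivAt
      simpa [mul_comm, mul_assoc, mul_left_comm] using
        ((h1.const_mul ((j.choose k : ℂ))).mul_const (c ^ (j - k)))
    have hE : HasDerivAt (fun ζ : ℂ => Complex.exp (ζ * c)) (c * Complex.exp (ζ * c)) ζ := by
      simpa [mul_comm] using ((hasDerivAt_id ζ).mul_const c).cexp
    have := ((hS ζ).fun_mul hE)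
    rw [this.deriv]
    have key : (∑ k ∈ range (j+1), (j.choose k : ℂ) * iteratedDeriv (k+1) f ζ * c ^ (j - k))
      + (∑ k ∈ range (j+1), (j.choose k : ℂ) * iteratedDeriv k f ζ * c ^ (j - k)) * c
    = ∑ k ∈ range (j+2), ((j+1).choose k : ℂ) * iteratedDeriv k f ζ * c ^ (j + 1 - k) := by
      have hBc : (∑ k ∈ range (j+1), (j.choose k : ℂ) * iteratedDeriv k f ζ * c ^ (j - k)) * c
          = ∑ k ∈ range (j+1), (j.choose k : ℂ) * iteratedDeriv k f ζ * c ^ (j + 1 - k) := by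
        rw [Finset.sum_mul]
        refine Finset.sum_congr rfl fun k hk => ?_
        rw [Finset.mem_range] at hk
        have : j + 1 - k = (j - k) + 1 := by omega
        rw [this, pow_succ]; ring
      rw [hBc]
      rw [Finset.sum_range_succ' (fun k => ((j+1).choose k : ℂ) * iteratedDeriv k f ζ * c ^ (j + 1 - k)) (j+1)]
      rw [Finset.sum_range_succ' (fun k => (j.choose k : ℂ) * iteratedDeriv k f ζ * c ^ (j + 1 - k)) j]
      have pascal : ∀ i ∈ range (j+1), ((j+1).choose (i+1) : ℂ) * iteratedDeriv (i+1) f ζ * c ^ (j + 1 - (i+1))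
          = (j.choose i : ℂ) * iteratedDeriv (i+1) f ζ * c ^ (j - i)
            + (j.choose (i+1) : ℂ) * iteratedDeriv (i+1) f ζ * c ^ (j + 1 - (i+1)) := by
        intro i hi
        rw [Nat.choose_succ_succ]
        push_cast
        simp only [Nat.succ_eq_add_one]
        ring
      rw [Finset.sum_congr rfl pascal, Finset.sum_add_distrib]
      have h2 : ∑ i ∈ range (j+1), (j.choose (i+1) : ℂ) * iteratedDeriv (i+1) f ζ * c ^ (j + 1 - (i+1))
          = ∑ i ∈ range j, (j.choose (i+1) : ℂ) * iteratedDeriv (i+1) f ζ * c ^ (j + 1 - (i+1)) := by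
        rw [Finset.sum_range_succ, Nat.choose_succ_self]
        simp
      rw [h2]
      simp [Nat.choose_zero_right]
      ring
    have : j + 1 + 1 = j + 2 := rfl
    rw [this]
    linear_combination Complex.exp (ζ * c) * key

lemma circle_avg (h : ℂ → ℂ) (hh : Differentiable ℂ h) (k : ℕ) (r : ℝ) (hr : 0 < r) :
    ∫ θ in (0:ℝ)..(2*Real.pi), Complex.exp (-(k:ℂ) * θ * I) * h (r * Complex.exp (θ * I))
      = 2 * Real.pi * (r:ℂ) ^ k * ((k.factorial : ℂ))⁻¹ * iteratedDeriv k h 0 := by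
  lift r to NNReal using hr.le with R hR
  have hR0 : 0 < R := by exact_mod_cast hr
  have hps : HasFPowerSeriesOnBall h (cauchyPowerSeries h 0 R) 0 ⊤ :=
    hh.hasFPowerSeriesOnBall 0 hR0
  have hfact : (k.factorial : ℂ) * (cauchyPowerSeries h 0 R k fun _ => (1:ℂ))
      = iteratedDeriv k h 0 := by
    have := hps.factorial_smul (1:ℂ) k
    rw [iteratedDeriv_eq_iteratedFDeriv, ← this, nsmul_eq_mul]
  have capply := cauchyPowerSeries_apply h 0 R k 1
  have hcm : ∀ θ : ℝ, circleMap 0 R θ = (R:ℂ) * Complex.exp (θ * I) := by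
    intro θ; simp [circleMap]
  have hRne : (R:ℂ) ≠ 0 := by exact_mod_cast hr.ne'
  have hJ : (∮ z in C(0, (R:ℝ)), (1 / (z - 0)) ^ k • (z - 0)⁻¹ • h z)
      = I * ((R:ℂ)⁻¹) ^ k * ∫ θ in (0:ℝ)..(2*Real.pi),
          Complex.exp (-(k:ℂ) * θ * I) * h ((R:ℝ) * Complex.exp (θ * I)) := by
    rw [circleIntegral, ← intervalIntegral.integral_const_mul]
    refine intervalIntegral.integral_congr fun θ _ => ?_
    rw [deriv_circleMap, hcm]
    have hexp : Complex.exp (θ * I) ≠ 0 := Complex.exp_ne_zero _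
    have hinv : ((R:ℂ) * Complex.exp (θ * I))⁻¹ = (R:ℂ)⁻¹ * Complex.exp (-(θ * I)) := by
      rw [mul_inv, ← Complex.exp_neg]
    have hexpk : (Complex.exp (-(θ * I))) ^ k = Complex.exp (-(k:ℂ) * θ * I) := by
      rw [← Complex.exp_nat_mul]; ring_nf
    have h1 : Complex.exp (θ * I) * Complex.exp (-(θ * I)) = 1 := by
      rw [← Complex.exp_add]; simp
    simp only [sub_zero, smul_eq_mul, one_div, hinv, mul_pow, hexpk]
    field_simp
    linear_combination (h ((R:ℂ) * Complex.exp (θ * I))) * h1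
  rw [capply, hJ, smul_eq_mul, inv_pow] at hfact
  have hπ : (Real.pi : ℂ) ≠ 0 := by exact_mod_cast Real.pi_ne_zero
  have hkf : ((k.factorial : ℂ)) ≠ 0 := by exact_mod_cast k.factorial_ne_zero
  have hRk : ((R:ℂ)) ^ k ≠ 0 := pow_ne_zero _ hRne
  have hIne : (I:ℂ) ≠ 0 := I_ne_zero
  set T := ∫ θ in (0:ℝ)..(2*Real.pi), Complex.exp (-(k:ℂ) * θ * I) * h ((R:ℝ) * Complex.exp (θ * I)) with hTdef
  field_simp at hfact
  have h2 : (I:ℂ) * ((k.factorial:ℂ) * T) = I * (iteratedDeriv k h 0 * (2*(Real.pi:ℂ)*(R:ℂ)^k)) := by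
    linear_combination I * hfact
  have h3 := mul_left_cancel₀ hIne h2
  field_simp
  linear_combination h3

lemma hC_of_bound (h : ℂ → ℂ) (C c : ℝ) (hb : ∀ z : ℂ, ‖h z‖ ≤ C * Real.exp (c * ‖z‖)) :
    0 ≤ C := by
  have := hb 0
  simp at this
  exact le_trans (norm_nonneg _) this

lemma core (h : ℂ → ℂ) (hh : Differentiable ℂ h) (C c : ℝ)
    (hb : ∀ z : ℂ, ‖h z‖ ≤ C * Real.exp (c * ‖z‖)) (k : ℕ) :
    ∫ w : ℂ, (conj w) ^ k * h w * Complex.exp (-(‖w‖:ℂ) ^ 2)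
      = (Real.pi : ℂ) * iteratedDeriv k h 0 := by
  have hC : 0 ≤ C := hC_of_bound h C c hb
  set K := C * k.factorial * Real.exp ((c+1)^2/2) with hK
  have hK0 : 0 ≤ K := by positivity
  set F : ℂ → ℂ := fun w => (conj w) ^ k * h w * Complex.exp (-(‖w‖:ℂ) ^ 2) with hF
  have hFc : Continuous F := by
    apply ((continuous_star.pow k).mul hh.continuous).mul
    exact Complex.continuous_exp.comp (((Complex.continuous_ofReal.comp continuous_norm).pow 2).neg)
  have hFb : ∀ w, ‖F w‖ ≤ K * Real.exp (-(1/2) * ‖w‖^2) := fun w => Fbound h C c hC hb k w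
  have hcis : ∀ θ : ℝ, ((Real.cos θ : ℂ) + (Real.sin θ : ℂ) * I) = Complex.exp (θ * I) := by
    intro θ
    rw [Complex.exp_mul_I, Complex.ofReal_cos, Complex.ofReal_sin]
  have hpolar := Complex.integral_comp_polarCoord_symm F
  rw [← hpolar, polarCoord_target]
  simp only [Complex.polarCoord_symm_apply, hcis]
  -- integrand now: fun p => p.1 • F (↑p.1 * cexp (↑p.2 * I))
  have hsm : MeasurableSet (Ioi (0:ℝ) ×ˢ Ioo (-Real.pi) Real.pi) :=
    measurableSet_Ioi.prod measurableSet_Ioo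
  have hmeas : (volume : Measure (ℝ×ℝ)).restrict (Ioi (0:ℝ) ×ˢ Ioo (-Real.pi) Real.pi)
      = (volume.restrict (Ioi (0:ℝ))).prod (volume.restrict (Ioo (-Real.pi) Real.pi)) := by
    rw [Measure.volume_eq_prod, Measure.prod_restrict]
  have hGc : Continuous fun p : ℝ×ℝ => (p.1 : ℝ) • F ((p.1:ℂ) * Complex.exp ((p.2:ℂ) * I)) := by
    apply continuous_fst.smul
    apply hFc.comp
    exact (Complex.continuous_ofReal.comp continuous_fst).mul
      (Complex.continuous_exp.comp ((Complex.continuous_ofReal.comp continuous_snd).mul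
        continuous_const))
  have hdom : Integrable (fun p : ℝ×ℝ => K * (p.1 * Real.exp (-(1/2) * p.1^2)))
      ((volume.restrict (Ioi (0:ℝ))).prod (volume.restrict (Ioo (-Real.pi) Real.pi))) := by
    have h1 : Integrable (fun x : ℝ => K * (x * Real.exp (-(1/2) * x^2))) volume := by
      have := integrable_rpow_mul_exp_neg_mul_sq (b := (1/2:ℝ)) (by norm_num)
        (s := 1) (by norm_num)
      simp only [Real.rpow_one] at this
      exact this.const_mul K
    have h2 : Integrable (fun _ : ℝ => (1:ℝ)) (volume.restrict (Ioo (-Real.pi) Real.pi)) :=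
      (integrableOn_const measure_Ioo_lt_top.ne : IntegrableOn _ _ _)
    have := Integrable.mul_prod (h1.restrict (s := Ioi (0:ℝ))) h2
    simpa using this
  have hGint : Integrable (fun p : ℝ×ℝ => (p.1 : ℝ) • F ((p.1:ℂ) * Complex.exp ((p.2:ℂ) * I)))
      ((volume.restrict (Ioi (0:ℝ))).prod (volume.restrict (Ioo (-Real.pi) Real.pi))) := by
    refine Integrable.mono' hdom hGc.aestronglyMeasurable ?_
    rw [← hmeas]
    refine (ae_restrict_mem hsm).mono fun p hp => ?_
    have hp1 : 0 < p.1 := hp.1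
    have hnorm : ‖(p.1:ℂ) * Complex.exp ((p.2:ℂ) * I)‖ = p.1 := by
      rw [norm_mul, Complex.norm_real,
        Complex.norm_exp_ofReal_mul_I, mul_one, Real.norm_eq_abs, abs_of_pos hp1]
    rw [norm_smul, Real.norm_eq_abs, abs_of_pos hp1]
    calc p.1 * ‖F ((p.1:ℂ) * Complex.exp ((p.2:ℂ) * I))‖
        ≤ p.1 * (K * Real.exp (-(1/2) * ‖(p.1:ℂ) * Complex.exp ((p.2:ℂ) * I)‖^2)) :=
          mul_le_mul_of_nonneg_left (hFb _) hp1.le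
      _ = K * (p.1 * Real.exp (-(1/2) * p.1^2)) := by rw [hnorm]; ring
  rw [show (∫ p in Ioi (0:ℝ) ×ˢ Ioo (-Real.pi) Real.pi,
        (p.1 : ℝ) • F ((p.1:ℂ) * Complex.exp ((p.2:ℂ) * I)))
      = ∫ p : ℝ×ℝ, (p.1 : ℝ) • F ((p.1:ℂ) * Complex.exp ((p.2:ℂ) * I))
          ∂((volume.restrict (Ioi (0:ℝ))).prod (volume.restrict (Ioo (-Real.pi) Real.pi)))
      from by rw [hmeas]]
  rw [MeasureTheory.integral_prod _ hGint]
  have hexpk : ∀ θ : ℝ, (Complex.exp (-((θ:ℂ) * I))) ^ k = Complex.exp (-(k:ℂ) * θ * I) := by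
    intro θ; rw [← Complex.exp_nat_mul]; ring_nf
  have hinner : ∀ r ∈ Ioi (0:ℝ),
      (∫ θ in Ioo (-Real.pi) Real.pi, (r : ℝ) • F ((r:ℂ) * Complex.exp ((θ:ℂ) * I)))
      = (2 * Real.pi * ((k.factorial : ℂ))⁻¹ * iteratedDeriv k h 0)
          * ((r ^ (2*k+1) * Real.exp (-r^2) : ℝ) : ℂ) := by
    intro r hr
    have hr0 : (0:ℝ) < r := hr
    have hFval : ∀ θ : ℝ, (r : ℝ) • F ((r:ℂ) * Complex.exp ((θ:ℂ) * I))
        = ((r:ℂ)^(k+1) * Complex.exp (-((r:ℂ))^2))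
            * (Complex.exp (-(k:ℂ) * θ * I) * h ((r:ℂ) * Complex.exp ((θ:ℂ) * I))) := by
      intro θ
      have hconj : conj ((r:ℂ) * Complex.exp ((θ:ℂ) * I))
          = (r:ℂ) * Complex.exp (-((θ:ℂ) * I)) := by
        rw [map_mul, Complex.conj_ofReal, ← Complex.exp_conj, map_mul, Complex.conj_ofReal,
          Complex.conj_I, mul_neg]
      have hnorm : ‖(r:ℂ) * Complex.exp ((θ:ℂ) * I)‖ = r := by
        rw [norm_mul, Complex.norm_real,
          Complex.norm_exp_ofReal_mul_I, mul_one, Real.norm_eq_abs, abs_of_pos hr0]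
      rw [hF]
      simp only [hconj, hnorm]
      rw [mul_pow, hexpk θ]
      rw [Complex.real_smul]
      push_cast
      ring
    simp only [hFval]
    rw [MeasureTheory.integral_const_mul]
    have hper : Function.Periodic
        (fun θ : ℝ => Complex.exp (-(k:ℂ) * θ * I) * h ((r:ℂ) * Complex.exp ((θ:ℂ) * I)))
        (2*Real.pi) := by
      intro θ
      have e1 : Complex.exp ((((θ + 2*Real.pi):ℝ) : ℂ) * I) = Complex.exp ((θ:ℂ) * I) := by
        push_cast
        rw [add_mul, Complex.exp_add]
        have : Complex.exp (2 * (Real.pi:ℂ) * I) = 1 := Complex.exp_two_pi_mul_I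
        rw [this, mul_one]
      have e2 : Complex.exp (-(k:ℂ) * (((θ + 2*Real.pi):ℝ):ℂ) * I)
          = Complex.exp (-(k:ℂ) * θ * I) := by
        push_cast
        have : -(k:ℂ) * ((θ:ℂ) + 2*(Real.pi:ℂ)) * I
            = -(k:ℂ) * θ * I + (((-(k:ℤ)):ℤ):ℂ) * (2*(Real.pi:ℂ)*I) := by push_cast; ring
        rw [this, Complex.exp_add, Complex.exp_int_mul_two_pi_mul_I, mul_one]
      simp only [e1, e2]
    have hIoo : (∫ θ in Ioo (-Real.pi) Real.pi,
        Complex.exp (-(k:ℂ) * θ * I) * h ((r:ℂ) * Complex.exp ((θ:ℂ) * I)))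
        = ∫ θ in (0:ℝ)..(2*Real.pi),
            Complex.exp (-(k:ℂ) * θ * I) * h ((r:ℂ) * Complex.exp ((θ:ℂ) * I)) := by
      rw [← MeasureTheory.integral_Ioc_eq_integral_Ioo,
        ← intervalIntegral.integral_of_le (by linarith [Real.pi_pos] : -Real.pi ≤ Real.pi)]
      have := hper.intervalIntegral_add_eq (-Real.pi) 0
      rw [show -Real.pi + 2*Real.pi = Real.pi by ring] at this
      rw [this, zero_add]
    rw [hIoo, circle_avg h hh k r hr0]
    push_cast
    ring
  rw [MeasureTheory.setIntegral_congr_fun measurableSet_Ioi hinner]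
  rw [MeasureTheory.integral_const_mul]
  have hcast : (∫ a in Ioi (0:ℝ), ((a ^ (2*k+1) * Real.exp (-a^2) : ℝ) : ℂ))
      = ((∫ a in Ioi (0:ℝ), a ^ (2*k+1) * Real.exp (-a^2) : ℝ) : ℂ) := by
    exact _root_.integral_ofReal
  rw [hcast]
  have hreal : (∫ r in Ioi (0:ℝ), r ^ (2*k+1) * Real.exp (-r^2)) = k.factorial / 2 := by
    have h0 := _root_.integral_rpow_mul_exp_neg_rpow (p := 2) (q := (2*(k:ℝ)+1))
      (by norm_num) (by linarith [Nat.cast_nonneg (α := ℝ) k])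
    have hcong : (∫ r in Ioi (0:ℝ), r ^ (2*(k:ℝ)+1) * Real.exp (-r ^ (2:ℝ)))
        = ∫ r in Ioi (0:ℝ), r ^ (2*k+1) * Real.exp (-r^2) := by
      refine MeasureTheory.setIntegral_congr_fun measurableSet_Ioi fun x hx => ?_
      have hx0 : (0:ℝ) < x := hx
      rw [show (2*(k:ℝ)+1) = ((2*k+1 : ℕ):ℝ) by push_cast; ring,
        Real.rpow_natCast, show (2:ℝ) = ((2:ℕ):ℝ) by norm_num, Real.rpow_natCast]
    rw [hcong] at h0
    rw [h0, show (2*(k:ℝ)+1+1)/2 = (k:ℝ)+1 by ring, Real.Gamma_nat_eq_factorial]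
    ring
  rw [hreal]
  have hkf : ((k.factorial : ℂ)) ≠ 0 := by exact_mod_cast k.factorial_ne_zero
  push_cast
  field_simp

theorem stmt_2 (j : ℕ) (f : ℂ → ℂ) (hf : Differentiable ℂ f)
    (hgrow : ∃ C c : ℝ, ∀ z : ℂ, ‖f z‖ ≤ C * Real.exp (c * ‖z‖)) (ζ : ℂ) :
    (1 / (Real.pi : ℂ)) *
        (∫ z : ℂ, (conj z) ^ j * f z *
          Complex.exp (conj z * ζ + z * conj ζ - (‖z‖ : ℂ) ^ 2))
      = iteratedDeriv j (fun ξ : ℂ => f ξ * Complex.exp (ξ * conj ζ)) ζ := by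
  obtain ⟨C, c, hgc⟩ := hgrow
  have hC : 0 ≤ C := hC_of_bound f C c hgc
  have hfζ : Differentiable ℂ (fun w : ℂ => f (w + ζ)) :=
    hf.comp (differentiable_id.add_const ζ)
  have hb' : ∀ w : ℂ, ‖f (w + ζ)‖ ≤ (C * Real.exp (|c| * ‖ζ‖)) * Real.exp (|c| * ‖w‖) := by
    intro w
    calc ‖f (w + ζ)‖ ≤ C * Real.exp (c * ‖w + ζ‖) := hgc (w + ζ)
      _ ≤ C * Real.exp (|c| * ‖w‖ + |c| * ‖ζ‖) := by
          apply mul_le_mul_of_nonneg_left _ hC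
          apply Real.exp_le_exp.2
          calc c * ‖w + ζ‖ ≤ |c| * ‖w + ζ‖ :=
                mul_le_mul_of_nonneg_right (le_abs_self c) (norm_nonneg _)
            _ ≤ |c| * (‖w‖ + ‖ζ‖) :=
                mul_le_mul_of_nonneg_left (norm_add_le w ζ) (abs_nonneg c)
            _ = |c| * ‖w‖ + |c| * ‖ζ‖ := by ring
      _ = (C * Real.exp (|c| * ‖ζ‖)) * Real.exp (|c| * ‖w‖) := by
          rw [Real.exp_add]; ring
  have htrans := MeasureTheory.integral_add_right_eq_self (μ := volume)
    (fun z : ℂ => (conj z) ^ j * f z * Complex.exp (conj z * ζ + z * conj ζ - (‖z‖:ℂ)^2)) ζ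
  rw [← htrans]
  have hzc : ∀ z : ℂ, ((‖z‖:ℂ))^2 = z * conj z := by
    intro z
    rw [Complex.mul_conj, Complex.normSq_eq_norm_sq]
    push_cast
    ring
  have hpoint : ∀ w : ℂ, (conj (w+ζ)) ^ j * f (w+ζ)
        * Complex.exp (conj (w+ζ) * ζ + (w+ζ) * conj ζ - (‖w+ζ‖:ℂ)^2)
      = ∑ k ∈ Finset.range (j+1),
          (Complex.exp (ζ * conj ζ) * (j.choose k : ℂ) * (conj ζ)^(j-k))
            * ((conj w)^k * f (w+ζ) * Complex.exp (-(‖w‖:ℂ)^2)) := by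
    intro w
    rw [hzc (w+ζ), hzc w, map_add]
    have hexp : (conj w + conj ζ) * ζ + (w+ζ) * conj ζ - (w+ζ) * (conj w + conj ζ)
        = ζ * conj ζ + -(w * conj w) := by ring
    rw [hexp, Complex.exp_add, add_pow, Finset.sum_mul, Finset.sum_mul]
    refine Finset.sum_congr rfl fun k hk => ?_
    ring
  simp only [hpoint]
  have hintk : ∀ k ∈ Finset.range (j+1), Integrable (fun w : ℂ =>
      (Complex.exp (ζ * conj ζ) * (j.choose k : ℂ) * (conj ζ)^(j-k))
        * ((conj w)^k * f (w+ζ) * Complex.exp (-(‖w‖:ℂ)^2))) := by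
    intro k _
    exact (key_integrable (fun w => f (w + ζ)) (hfζ.continuous)
      (C * Real.exp (|c| * ‖ζ‖)) |c| hb' k).const_mul _
  rw [MeasureTheory.integral_finset_sum _ hintk]
  have hcore : ∀ k ∈ Finset.range (j+1),
      (∫ w : ℂ, (Complex.exp (ζ * conj ζ) * (j.choose k : ℂ) * (conj ζ)^(j-k))
        * ((conj w)^k * f (w+ζ) * Complex.exp (-(‖w‖:ℂ)^2)))
      = (Complex.exp (ζ * conj ζ) * (j.choose k : ℂ) * (conj ζ)^(j-k))
          * ((Real.pi : ℂ) * iteratedDeriv k f ζ) := by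
    intro k _
    rw [MeasureTheory.integral_const_mul]
    congr 1
    rw [core (fun w => f (w + ζ)) hfζ (C * Real.exp (|c| * ‖ζ‖)) |c| hb' k]
    congr 1
    have := iteratedDeriv_comp_add_const k f ζ
    calc iteratedDeriv k (fun w : ℂ => f (w + ζ)) 0
        = iteratedDeriv k f (0 + ζ) := by rw [this]
      _ = iteratedDeriv k f ζ := by rw [zero_add]
  rw [Finset.sum_congr rfl hcore, leibniz_exp f hf (conj ζ) j ζ, Finset.sum_mul,
    Finset.mul_sum]
  refine Finset.sum_congr rfl fun k hk => ?_
  have hπ : (Real.pi : ℂ) ≠ 0 := by exact_mod_cast Real.pi_ne_zero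
  field_simp
end

section
/- In ℂ² let p(z₁,z₂) = z₁, f(z) = e^{2πi z₂}, g(z) = e^{z₂}. Then for every monomial z^α = z₁^{α₁} z₂^{α₂}, T_{p f conj(g)} z^α = p(z) f(z) (z + e₂)^α and T_{conj(g)} z^α = (z + e₂)^α, where e₂ = (0,1); consequently T_{pf} T_{conj(g)} z^α = T_{p f conj(g)} z^α for all multi-indices α. -/
open MeasureTheory Complex ComplexConjugate

/-- Toeplitz operator on the Fock space over `ℂ²`, acting via the Gaussian integral. -/
noncomputable def toeplitz2 (φ u : ℂ × ℂ → ℂ) (w : ℂ × ℂ) : ℂ :=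
  ∫ z : ℂ × ℂ, φ z * u z * Complex.exp (w.1 * conj z.1 + w.2 * conj z.2) *
    (((Real.pi ^ 2)⁻¹ * Real.exp (-(‖z.1‖ ^ 2 + ‖z.2‖ ^ 2)) : ℝ) : ℂ)


noncomputable def g1 (z : ℂ) : ℂ := ((Real.pi⁻¹ * Real.exp (-‖z‖^2) : ℝ) : ℂ)

lemma norm_sq_eq (z : ℂ) : ‖z‖^2 = z.re^2 + z.im^2 := by
  rw [Complex.sq_norm, Complex.normSq_apply]; ring

lemma integrable_gauss_half : Integrable (fun z : ℂ => Real.exp (-(1/2) * ‖z‖^2)) := by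
  have h : Integrable (fun p : ℝ × ℝ => Real.exp (-(1/2) * p.1^2) * Real.exp (-(1/2) * p.2^2)) :=
    (integrable_exp_neg_mul_sq (by norm_num)).mul_prod (integrable_exp_neg_mul_sq (by norm_num))
  rw [Measure.volume_eq_prod] at h
  have := (Complex.volume_preserving_equiv_real_prod.integrable_comp_emb
    Complex.measurableEquivRealProd.measurableEmbedding
    (g := fun p : ℝ × ℝ => Real.exp (-(1/2) * p.1^2) * Real.exp (-(1/2) * p.2^2))).2 h
  refine this.congr ?_
  filter_upwards with z
  simp only [Function.comp, Complex.measurableEquivRealProd_apply]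
  rw [← Real.exp_add, norm_sq_eq]
  ring_nf

lemma integrable_core (m : ℕ) (C : ℝ) :
    Integrable (fun z : ℂ => ‖z‖^m * Real.exp (C * ‖z‖ - ‖z‖^2)) := by
  have key : ∀ t : ℝ, 0 ≤ t → t^m * Real.exp (C * t - t^2)
      ≤ (m.factorial * Real.exp ((C+1)^2/2)) * Real.exp (-(1/2) * t^2) := by
    intro t ht
    have h1 : t^m ≤ m.factorial * Real.exp t := by
      have := Real.pow_div_factorial_le_exp t ht m
      rw [div_le_iff₀ (by positivity)] at this
      linarith [this]
    calc t^m * Real.exp (C * t - t^2)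
        ≤ (m.factorial * Real.exp t) * Real.exp (C * t - t^2) := by
          apply mul_le_mul_of_nonneg_right h1 (Real.exp_nonneg _)
      _ = m.factorial * Real.exp ((C+1) * t - t^2) := by
          rw [mul_assoc, ← Real.exp_add]; ring_nf
      _ ≤ (m.factorial * Real.exp ((C+1)^2/2)) * Real.exp (-(1/2) * t^2) := by
          rw [mul_assoc, ← Real.exp_add]
          apply mul_le_mul_of_nonneg_left (Real.exp_le_exp.2 (by nlinarith [sq_nonneg (t - (C+1))])) (by positivity)
  refine (integrable_gauss_half.const_mul (m.factorial * Real.exp ((C+1)^2/2))).mono' ?_ ?_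
  · apply Continuous.aestronglyMeasurable
    fun_prop
  · filter_upwards with z
    rw [Real.norm_of_nonneg (by positivity)]
    exact key ‖z‖ (norm_nonneg z)

lemma norm_g1 (z : ℂ) : ‖g1 z‖ = Real.pi⁻¹ * Real.exp (-‖z‖^2) := by
  rw [g1, Complex.norm_real, Real.norm_of_nonneg (by positivity)]

lemma norm_integrand (m : ℕ) (a b z : ℂ) :
    ‖z^m * Complex.exp (a*z + b*(conj z)) * g1 z‖
      ≤ Real.pi⁻¹ * (‖z‖^m * Real.exp ((‖a‖ + ‖b‖) * ‖z‖ - ‖z‖^2)) := by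
  rw [norm_mul, norm_mul, norm_pow, norm_g1,
    Complex.norm_exp]
  have hre : (a*z + b*(conj z)).re ≤ (‖a‖ + ‖b‖) * ‖z‖ := by
    calc (a*z + b*(conj z)).re ≤ ‖a*z + b*(conj z)‖ := Complex.re_le_norm _
      _ ≤ ‖a*z‖ + ‖b*(conj z)‖ := norm_add_le _ _
      _ = (‖a‖ + ‖b‖) * ‖z‖ := by
          rw [norm_mul, norm_mul, Complex.norm_conj]; ring
  calc ‖z‖^m * Real.exp ((a*z + b*(conj z)).re) * (Real.pi⁻¹ * Real.exp (-‖z‖^2))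
      ≤ ‖z‖^m * Real.exp ((‖a‖+‖b‖)*‖z‖) * (Real.pi⁻¹ * Real.exp (-‖z‖^2)) := by
        gcongr
    _ = Real.pi⁻¹ * (‖z‖^m * Real.exp ((‖a‖ + ‖b‖) * ‖z‖ - ‖z‖^2)) := by
        rw [sub_eq_add_neg, Real.exp_add]; ring

lemma continuous_g1 : Continuous g1 := by
  unfold g1
  exact Complex.continuous_ofReal.comp (continuous_const.mul
    (Real.continuous_exp.comp (continuous_norm.pow 2).neg))

lemma J_int (m : ℕ) (a b : ℂ) :
    Integrable (fun z : ℂ => z^m * Complex.exp (a*z + b*(conj z)) * g1 z) := by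
  refine ((integrable_core m (‖a‖ + ‖b‖)).const_mul Real.pi⁻¹).mono' ?_ ?_
  · apply Continuous.aestronglyMeasurable
    refine ((continuous_pow m).comp continuous_id).mul ?_ |>.mul continuous_g1
    exact Complex.continuous_exp.comp (((continuous_const.mul continuous_id).add
      (continuous_const.mul Complex.continuous_conj)))
  · filter_upwards with z
    exact norm_integrand m a b z

lemma J0 (a b : ℂ) :
    ∫ z : ℂ, Complex.exp (a*z + b*(conj z)) * g1 z = Complex.exp (a*b) := by
  have h1 : ∫ z : ℂ, Complex.exp (a*z + b*(conj z)) * g1 z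
      = ∫ p : ℝ × ℝ, Complex.exp (a*(p.1 + p.2*Complex.I) + b*(conj (p.1 + p.2*Complex.I : ℂ)))
          * g1 (p.1 + p.2*Complex.I) := by
    rw [← Complex.volume_preserving_equiv_real_prod.integral_comp
      Complex.measurableEquivRealProd.measurableEmbedding]
    congr 1
    funext z
    simp only [Complex.measurableEquivRealProd_apply]
    rw [show ((z.re : ℂ) + (z.im : ℂ)*Complex.I) = z from Complex.re_add_im z]
  rw [h1]
  have h2 : ∀ p : ℝ × ℝ, Complex.exp (a*(p.1 + p.2*Complex.I) + b*(conj (p.1 + p.2*Complex.I : ℂ)))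
      * g1 (p.1 + p.2*Complex.I)
      = (Real.pi⁻¹ : ℂ) * (Complex.exp ((-1)*(p.1:ℂ)^2 + (a+b)*p.1 + 0)
          * Complex.exp ((-1)*(p.2:ℂ)^2 + (Complex.I*(a-b))*p.2 + 0)) := by
    intro p
    rw [g1]
    have hn : ‖((p.1:ℂ) + (p.2:ℂ)*Complex.I)‖^2 = p.1^2 + p.2^2 := by
      rw [norm_sq_eq]; simp
    rw [hn]
    have hc : conj ((p.1:ℂ) + (p.2:ℂ)*Complex.I) = (p.1:ℂ) - (p.2:ℂ)*Complex.I := by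
      simp [map_add, map_mul, Complex.conj_I, Complex.conj_ofReal]; ring
    rw [hc]
    push_cast [Complex.ofReal_exp]
    rw [← Complex.exp_add]
    have key : ∀ (c x y u : ℂ), x + y = u → Complex.exp x * (c * Complex.exp y) = c * Complex.exp u := by
      intro c x y u h
      rw [← h, ← mul_assoc, mul_comm _ c, mul_assoc, ← Complex.exp_add]
    exact key _ _ _ _ (by ring)
  simp_rw [h2]
  rw [integral_const_mul, Measure.volume_eq_prod,
    integral_prod_mul (f := fun x : ℝ => Complex.exp ((-1)*(x:ℂ)^2 + (a+b)*x + 0))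
      (g := fun y : ℝ => Complex.exp ((-1)*(y:ℂ)^2 + (Complex.I*(a-b))*y + 0)),
    integral_cexp_quadratic (by norm_num : ((-1:ℂ)).re < 0),
    integral_cexp_quadratic (by norm_num : ((-1:ℂ)).re < 0)]
  have hpi : ((Real.pi : ℂ) / -(-1)) = (Real.pi : ℂ) := by ring
  rw [hpi]
  have hpow : ((Real.pi:ℂ)) ^ (1/2 : ℂ) * ((Real.pi:ℂ)) ^ (1/2 : ℂ) = (Real.pi : ℂ) := by
    rw [← Complex.cpow_add _ _ (by exact_mod_cast Real.pi_ne_zero)]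
    norm_num
  have hpine : (Real.pi : ℂ) ≠ 0 := by exact_mod_cast Real.pi_ne_zero
  field_simp
  rw [sq, hpow, mul_assoc, ← Complex.exp_add]
  congr 2
  rw [Complex.I_sq]
  ring

lemma J_deriv (m : ℕ) (b a₀ : ℂ) :
    HasDerivAt (fun a : ℂ => ∫ z : ℂ, z^m * Complex.exp (a*z + b*(conj z)) * g1 z)
      (∫ z : ℂ, z^(m+1) * Complex.exp (a₀*z + b*(conj z)) * g1 z) a₀ := by
  have meas : ∀ k : ℕ, ∀ a : ℂ, AEStronglyMeasurable
      (fun z : ℂ => z^k * Complex.exp (a*z + b*(conj z)) * g1 z) volume := by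
    intro k a
    apply Continuous.aestronglyMeasurable
    refine ((continuous_pow k).comp continuous_id).mul ?_ |>.mul continuous_g1
    exact Complex.continuous_exp.comp (((continuous_const.mul continuous_id).add
      (continuous_const.mul Complex.continuous_conj)))
  have h := hasDerivAt_integral_of_dominated_loc_of_deriv_le (μ := volume)
    (F := fun a (z : ℂ) => z^m * Complex.exp (a*z + b*(conj z)) * g1 z)
    (F' := fun a (z : ℂ) => z^(m+1) * Complex.exp (a*z + b*(conj z)) * g1 z)
    (x₀ := a₀)
    (bound := fun z : ℂ => Real.pi⁻¹ * (‖z‖^(m+1) * Real.exp (((‖a₀‖+1) + ‖b‖) * ‖z‖ - ‖z‖^2)))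
    (s := Metric.ball a₀ 1) (Metric.ball_mem_nhds a₀ one_pos)
    (Filter.Eventually.of_forall fun a => meas m a)
    (J_int m a₀ b)
    (meas (m+1) a₀)
    ?_ ?_ ?_
  · exact h.2
  · filter_upwards with z
    intro a ha
    refine le_trans (norm_integrand (m+1) a b z) ?_
    have hb : ‖a‖ ≤ ‖a₀‖ + 1 := by
      have h4 := Metric.mem_ball.mp ha
      rw [dist_eq_norm] at h4
      have h3 : ‖a‖ - ‖a₀‖ ≤ ‖a - a₀‖ := norm_sub_norm_le a a₀
      linarith
    gcongr
  · exact ((integrable_core (m+1) ((‖a₀‖+1) + ‖b‖)).const_mul Real.pi⁻¹)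
  · filter_upwards with z
    intro a ha
    have h1 : HasDerivAt (fun a : ℂ => a*z + b*(conj z)) z a := by
      simpa using (hasDerivAt_id a).mul_const z |>.add_const (b*(conj z))
    have h2 := (h1.cexp.const_mul ((z:ℂ)^m)).mul_const (g1 z)
    show HasDerivAt _ (z^(m+1) * Complex.exp (a*z + b*(conj z)) * g1 z) a
    rw [show z^(m+1) * Complex.exp (a*z + b*(conj z)) * g1 z = z^m * (Complex.exp (a*z + b*(conj z)) * z) * g1 z by ring]
    exact h2

lemma J (m : ℕ) (a b : ℂ) :
    ∫ z : ℂ, z^m * Complex.exp (a*z + b*(conj z)) * g1 z = b^m * Complex.exp (a*b) := by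
  induction m generalizing a with
  | zero => simpa using J0 a b
  | succ m ih =>
    have h1 : HasDerivAt (fun a : ℂ => ∫ z : ℂ, z^m * Complex.exp (a*z + b*(conj z)) * g1 z)
        (∫ z : ℂ, z^(m+1) * Complex.exp (a*z + b*(conj z)) * g1 z) a := J_deriv m b a
    have h2 : HasDerivAt (fun a : ℂ => b^m * Complex.exp (a*b)) (b^(m+1) * Complex.exp (a*b)) a := by
      have := ((hasDerivAt_id a).mul_const b).cexp.const_mul ((b:ℂ)^m)
      simp only [one_mul, id_eq] at this
      rw [show b^(m+1) * Complex.exp (a*b) = b^m * (Complex.exp (a*b) * b) by ring]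
      exact this
    have h3 : (fun a : ℂ => ∫ z : ℂ, z^m * Complex.exp (a*z + b*(conj z)) * g1 z)
        = fun a : ℂ => b^m * Complex.exp (a*b) := funext fun a => ih a
    rw [← h3] at h2
    exact h1.unique h2

lemma J_int_shift (k : ℕ) (a b : ℂ) :
    Integrable (fun z : ℂ => (z+1)^k * Complex.exp (a*z + b*(conj z)) * g1 z) := by
  have h : (fun z : ℂ => (z+1)^k * Complex.exp (a*z + b*(conj z)) * g1 z)
      = fun z : ℂ => ∑ j ∈ Finset.range (k+1),
          (k.choose j : ℂ) * (z^j * Complex.exp (a*z + b*(conj z)) * g1 z) := by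
    funext z
    rw [add_pow]
    rw [Finset.sum_mul, Finset.sum_mul]
    congr 1
    funext j
    ring
  rw [h]
  exact integrable_finset_sum _ fun j _ => (J_int j a b).const_mul _

lemma J_shift (k : ℕ) (a b : ℂ) :
    ∫ z : ℂ, (z+1)^k * Complex.exp (a*z + b*(conj z)) * g1 z
      = (b+1)^k * Complex.exp (a*b) := by
  have h : ∀ z : ℂ, (z+1)^k * Complex.exp (a*z + b*(conj z)) * g1 z
      = ∑ j ∈ Finset.range (k+1),
          (k.choose j : ℂ) * (z^j * Complex.exp (a*z + b*(conj z)) * g1 z) := by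
    intro z
    rw [add_pow, Finset.sum_mul, Finset.sum_mul]
    congr 1
    funext j
    ring
  simp_rw [h]
  rw [integral_finset_sum _ fun j _ => (J_int j a b).const_mul _]
  simp_rw [integral_const_mul, J]
  rw [add_pow]
  rw [Finset.sum_mul]
  congr 1
  funext j
  ring

lemma weight_split (z : ℂ × ℂ) :
    (((Real.pi ^ 2)⁻¹ * Real.exp (-(‖z.1‖ ^ 2 + ‖z.2‖ ^ 2)) : ℝ) : ℂ) = g1 z.1 * g1 z.2 := by
  simp only [g1]
  rw [← Complex.ofReal_mul]
  congr 1
  rw [neg_add, Real.exp_add]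
  ring

lemma part2 (α₁ α₂ : ℕ) (w : ℂ × ℂ) :
    toeplitz2 (fun z => conj (Complex.exp z.2)) (fun z => z.1 ^ α₁ * z.2 ^ α₂) w
      = w.1 ^ α₁ * (w.2 + 1) ^ α₂ := by
  simp only [toeplitz2]
  have hint : ∀ z : ℂ × ℂ,
      conj (Complex.exp z.2) * (z.1 ^ α₁ * z.2 ^ α₂) *
        Complex.exp (w.1 * conj z.1 + w.2 * conj z.2) *
        (((Real.pi ^ 2)⁻¹ * Real.exp (-(‖z.1‖ ^ 2 + ‖z.2‖ ^ 2)) : ℝ) : ℂ)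
      = (z.1 ^ α₁ * Complex.exp (0*z.1 + w.1*(conj z.1)) * g1 z.1) *
        (z.2 ^ α₂ * Complex.exp (0*z.2 + (1+w.2)*(conj z.2)) * g1 z.2) := by
    intro z
    rw [weight_split, ← Complex.exp_conj]
    have e1 : Complex.exp (0*z.1 + w.1*(conj z.1)) = Complex.exp (w.1 * conj z.1) := by
      congr 1; ring
    have e2 : Complex.exp (0*z.2 + (1+w.2)*(conj z.2))
        = Complex.exp (conj z.2) * Complex.exp (w.2 * conj z.2) := by
      rw [← Complex.exp_add]; congr 1; ring
    have e3 : Complex.exp (w.1 * conj z.1 + w.2 * conj z.2)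
        = Complex.exp (w.1 * conj z.1) * Complex.exp (w.2 * conj z.2) := by
      rw [← Complex.exp_add]
    rw [e1, e2, e3]
    ring
  rw [integral_congr_ae (Filter.Eventually.of_forall hint)]
  rw [Measure.volume_eq_prod]
  rw [integral_prod_mul (f := fun z₁ : ℂ => z₁ ^ α₁ * Complex.exp (0*z₁ + w.1*(conj z₁)) * g1 z₁)
    (g := fun z₂ : ℂ => z₂ ^ α₂ * Complex.exp (0*z₂ + (1+w.2)*(conj z₂)) * g1 z₂)]
  rw [J α₁ 0 w.1, J α₂ 0 (1+w.2)]
  simp only [zero_mul, Complex.exp_zero, mul_one]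
  ring

lemma part1 (α₁ α₂ : ℕ) (w : ℂ × ℂ) :
    toeplitz2
        (fun z => z.1 * Complex.exp (2 * Real.pi * Complex.I * z.2) * conj (Complex.exp z.2))
        (fun z => z.1 ^ α₁ * z.2 ^ α₂) w
      = w.1 * Complex.exp (2 * Real.pi * Complex.I * w.2) * (w.1 ^ α₁ * (w.2 + 1) ^ α₂) := by
  simp only [toeplitz2]
  have hint : ∀ z : ℂ × ℂ,
      z.1 * Complex.exp (2 * Real.pi * Complex.I * z.2) * conj (Complex.exp z.2) *
        (z.1 ^ α₁ * z.2 ^ α₂) *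
        Complex.exp (w.1 * conj z.1 + w.2 * conj z.2) *
        (((Real.pi ^ 2)⁻¹ * Real.exp (-(‖z.1‖ ^ 2 + ‖z.2‖ ^ 2)) : ℝ) : ℂ)
      = (z.1 ^ (α₁+1) * Complex.exp (0*z.1 + w.1*(conj z.1)) * g1 z.1) *
        (z.2 ^ α₂ * Complex.exp ((2 * Real.pi * Complex.I)*z.2 + (1+w.2)*(conj z.2)) * g1 z.2) := by
    intro z
    rw [weight_split, ← Complex.exp_conj]
    have e1 : Complex.exp (0*z.1 + w.1*(conj z.1)) = Complex.exp (w.1 * conj z.1) := by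
      congr 1; ring
    have e2 : Complex.exp ((2 * Real.pi * Complex.I)*z.2 + (1+w.2)*(conj z.2))
        = Complex.exp (2 * Real.pi * Complex.I * z.2) * Complex.exp (conj z.2) *
          Complex.exp (w.2 * conj z.2) := by
      rw [← Complex.exp_add, ← Complex.exp_add]; congr 1; ring
    have e3 : Complex.exp (w.1 * conj z.1 + w.2 * conj z.2)
        = Complex.exp (w.1 * conj z.1) * Complex.exp (w.2 * conj z.2) := by
      rw [← Complex.exp_add]
    rw [e1, e2, e3]
    ring
  rw [integral_congr_ae (Filter.Eventually.of_forall hint)]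
  rw [Measure.volume_eq_prod]
  rw [integral_prod_mul
    (f := fun z₁ : ℂ => z₁ ^ (α₁+1) * Complex.exp (0*z₁ + w.1*(conj z₁)) * g1 z₁)
    (g := fun z₂ : ℂ => z₂ ^ α₂ * Complex.exp ((2 * Real.pi * Complex.I)*z₂ + (1+w.2)*(conj z₂)) * g1 z₂)]
  rw [J (α₁+1) 0 w.1, J α₂ (2 * Real.pi * Complex.I) (1+w.2)]
  simp only [zero_mul, Complex.exp_zero, mul_one]
  have e4 : Complex.exp (2 * Real.pi * Complex.I * (1+w.2))
      = Complex.exp (2 * Real.pi * Complex.I * w.2) := by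
    rw [show (2 * (Real.pi:ℂ) * Complex.I * (1+w.2)) = 2*Real.pi*Complex.I + 2*Real.pi*Complex.I*w.2 by ring,
      Complex.exp_add, Complex.exp_two_pi_mul_I, one_mul]
  rw [e4, pow_succ]
  ring

lemma part3 (α₁ α₂ : ℕ) (w : ℂ × ℂ) :
    toeplitz2 (fun z => z.1 * Complex.exp (2 * Real.pi * Complex.I * z.2))
        (fun z => toeplitz2 (fun x => conj (Complex.exp x.2))
          (fun x => x.1 ^ α₁ * x.2 ^ α₂) z) w
      = toeplitz2
          (fun z => z.1 * Complex.exp (2 * Real.pi * Complex.I * z.2) * conj (Complex.exp z.2))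
          (fun z => z.1 ^ α₁ * z.2 ^ α₂) w := by
  rw [part1 α₁ α₂ w]
  have hu : (fun z : ℂ × ℂ => toeplitz2 (fun x => conj (Complex.exp x.2))
      (fun x => x.1 ^ α₁ * x.2 ^ α₂) z) = fun z : ℂ × ℂ => z.1 ^ α₁ * (z.2+1) ^ α₂ :=
    funext (part2 α₁ α₂)
  rw [hu]
  simp only [toeplitz2]
  have hint : ∀ z : ℂ × ℂ,
      z.1 * Complex.exp (2 * Real.pi * Complex.I * z.2) *
        (z.1 ^ α₁ * (z.2+1) ^ α₂) *
        Complex.exp (w.1 * conj z.1 + w.2 * conj z.2) *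
        (((Real.pi ^ 2)⁻¹ * Real.exp (-(‖z.1‖ ^ 2 + ‖z.2‖ ^ 2)) : ℝ) : ℂ)
      = (z.1 ^ (α₁+1) * Complex.exp (0*z.1 + w.1*(conj z.1)) * g1 z.1) *
        ((z.2+1) ^ α₂ * Complex.exp ((2 * Real.pi * Complex.I)*z.2 + w.2*(conj z.2)) * g1 z.2) := by
    intro z
    rw [weight_split]
    have e1 : Complex.exp (0*z.1 + w.1*(conj z.1)) = Complex.exp (w.1 * conj z.1) := by
      congr 1; ring
    have e2 : Complex.exp ((2 * Real.pi * Complex.I)*z.2 + w.2*(conj z.2))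
        = Complex.exp (2 * Real.pi * Complex.I * z.2) * Complex.exp (w.2 * conj z.2) := by
      rw [← Complex.exp_add]
    have e3 : Complex.exp (w.1 * conj z.1 + w.2 * conj z.2)
        = Complex.exp (w.1 * conj z.1) * Complex.exp (w.2 * conj z.2) := by
      rw [← Complex.exp_add]
    rw [e1, e2, e3]
    ring
  rw [integral_congr_ae (Filter.Eventually.of_forall hint)]
  rw [Measure.volume_eq_prod]
  rw [integral_prod_mul
    (f := fun z₁ : ℂ => z₁ ^ (α₁+1) * Complex.exp (0*z₁ + w.1*(conj z₁)) * g1 z₁)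
    (g := fun z₂ : ℂ => (z₂+1) ^ α₂ * Complex.exp ((2 * Real.pi * Complex.I)*z₂ + w.2*(conj z₂)) * g1 z₂)]
  rw [J (α₁+1) 0 w.1, J_shift α₂ (2 * Real.pi * Complex.I) w.2]
  simp only [zero_mul, Complex.exp_zero, mul_one]
  rw [pow_succ]
  ring

theorem stmt_9 (α₁ α₂ : ℕ) (w : ℂ × ℂ) :
    (toeplitz2
        (fun z => z.1 * Complex.exp (2 * Real.pi * Complex.I * z.2) * conj (Complex.exp z.2))
        (fun z => z.1 ^ α₁ * z.2 ^ α₂) w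
      = w.1 * Complex.exp (2 * Real.pi * Complex.I * w.2) * (w.1 ^ α₁ * (w.2 + 1) ^ α₂)) ∧
    (toeplitz2 (fun z => conj (Complex.exp z.2)) (fun z => z.1 ^ α₁ * z.2 ^ α₂) w
      = w.1 ^ α₁ * (w.2 + 1) ^ α₂) ∧
    (toeplitz2 (fun z => z.1 * Complex.exp (2 * Real.pi * Complex.I * z.2))
        (fun z => toeplitz2 (fun x => conj (Complex.exp x.2))
          (fun x => x.1 ^ α₁ * x.2 ^ α₂) z) w
      = toeplitz2
          (fun z => z.1 * Complex.exp (2 * Real.pi * Complex.I * z.2) * conj (Complex.exp z.2))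
          (fun z => z.1 ^ α₁ * z.2 ^ α₂) w) :=
  ⟨part1 α₁ α₂ w, part2 α₁ α₂ w, part3 α₁ α₂ w⟩
end

section
/- Pluriharmonic Berezin fixed point in ℂ²: let p be a holomorphic polynomial on ℂ² with p(z₁,z₂) = p(z₁,0) (p depends only on z₁), let f(z) = e^{2πi z₂} and g(z) = e^{z₂}. Then B[p f conj(g)](z) = p(z) f(z) conj(g(z)) for all z ∈ ℂ²; i.e., p f conj(g) is a fixed point of the Berezin transform even though p may be non-constant. -/
open MeasureTheory Complex ComplexConjugate


lemma integral_complex_eq (f : ℂ → ℂ) :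
    ∫ w : ℂ, f w = ∫ q : ℝ × ℝ, f (q.1 + q.2 * Complex.I) := by
  rw [← (Complex.volume_preserving_equiv_real_prod.symm).integral_comp
    Complex.measurableEquivRealProd.symm.measurableEmbedding]
  simp_rw [Complex.measurableEquivRealProd_symm_apply, Complex.mk_eq_add_mul_I]

lemma norm_sq_cast (w : ℂ) : ((‖w‖^2 : ℝ) : ℂ) = w * conj w := by
  rw [Complex.mul_conj, Complex.normSq_eq_norm_sq]

lemma gauss_ab (a b : ℂ) :
    ∫ w : ℂ, Complex.exp (a * w + b * conj w - ((‖w‖ ^ 2 : ℝ) : ℂ))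
      = (Real.pi : ℂ) * Complex.exp (a * b) := by
  rw [integral_complex_eq]
  have key : ∀ q : ℝ × ℝ,
      Complex.exp (a * (q.1 + q.2 * I) + b * conj ((q.1:ℂ) + q.2 * I)
          - ((‖(q.1:ℂ) + q.2 * I‖ ^ 2 : ℝ) : ℂ))
        = Complex.exp (-1 * (q.1:ℂ)^2 + (a+b) * q.1 + 0)
          * Complex.exp (-1 * (q.2:ℂ)^2 + ((a-b)*I) * q.2 + 0) := by
    intro q
    rw [← Complex.exp_add, norm_sq_cast]
    congr 1
    simp only [map_add, map_mul, Complex.conj_ofReal, Complex.conj_I]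
    linear_combination ((q.2:ℂ)^2) * Complex.I_sq
  simp_rw [key]
  rw [Measure.volume_eq_prod,
    integral_prod_mul (f := fun x : ℝ => Complex.exp (-1 * (x:ℂ)^2 + (a+b) * x + 0))
      (g := fun y : ℝ => Complex.exp (-1 * (y:ℂ)^2 + ((a-b)*I) * y + 0)),
    integral_cexp_quadratic (by norm_num : (-1:ℂ).re < 0),
    integral_cexp_quadratic (by norm_num : (-1:ℂ).re < 0)]
  have hπ : ((Real.pi : ℂ) / -(-1)) = (Real.pi : ℂ) := by norm_num
  have h2 : (1/2 : ℂ) + 1/2 = 1 := by norm_num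
  rw [hπ, mul_mul_mul_comm, ← Complex.cpow_add _ _ (by exact_mod_cast Real.pi_ne_zero), h2,
    Complex.cpow_one, ← Complex.exp_add]
  congr 1
  have hI : ((a-b)*I)^2 = -(a-b)^2 := by rw [mul_pow, Complex.I_sq]; ring
  rw [hI]
  ring


lemma gauss_norm (x y : ℝ) : ‖(x:ℂ) + y * Complex.I‖^2 = x^2 + y^2 := by
  rw [Complex.sq_norm, ← Complex.mk_eq_add_mul_I, Complex.normSq_mk]
  ring

lemma moment_zero {m : ℕ} (hm : m ≠ 0) :
    ∫ u : ℂ, u ^ m * Complex.exp (-((‖u‖^2 : ℝ) : ℂ)) = 0 := by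
  set f : ℂ → ℂ := fun u => u ^ m * Complex.exp (-((‖u‖^2 : ℝ) : ℂ)) with hf
  set c : Circle := Circle.exp (Real.pi / m) with hc
  have hrot : ∫ u : ℂ, f ((rotation c) u) = ∫ u : ℂ, f u :=
    (rotation c).measurePreserving.integral_comp
      (rotation c).toHomeomorph.measurableEmbedding f
  have hm' : (m : ℂ) ≠ 0 := Nat.cast_ne_zero.mpr hm
  have hcm : ((c : ℂ)) ^ m = -1 := by
    rw [Circle.coe_exp, ← Complex.exp_nat_mul]
    have : (m : ℂ) * ((Real.pi / m : ℝ) * I) = Real.pi * I := by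
      push_cast
      field_simp
    rw [this, Complex.exp_pi_mul_I]
  have hnc : ‖(c : ℂ)‖ = 1 := by rw [Circle.norm_coe]
  have hpt : ∀ u : ℂ, f ((rotation c) u) = (c : ℂ) ^ m * f u := by
    intro u
    simp only [hf, rotation_apply, mul_pow, norm_mul, hnc, one_mul]
    ring
  simp_rw [hpt, integral_const_mul, hcm] at hrot
  linear_combination ((-1 : ℂ)/2) * hrot

lemma integrable_moment (m : ℕ) :
    Integrable (fun u : ℂ => u ^ m * Complex.exp (-((‖u‖^2 : ℝ) : ℂ))) := by
  rw [← (Complex.volume_preserving_equiv_real_prod.symm).integrable_comp_emb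
    Complex.measurableEquivRealProd.symm.measurableEmbedding]
  have hs : (-1:ℝ) < (m:ℝ) := (by norm_num : (-1:ℝ) < 0).trans_le (Nat.cast_nonneg m)
  have hIoi : IntegrableOn (fun x : ℝ => |x| ^ m * Real.exp (-x^2)) (Set.Ioi 0) := by
    apply (integrableOn_rpow_mul_exp_neg_mul_sq one_pos hs).congr_fun _ measurableSet_Ioi
    intro x hx
    show x ^ (m:ℝ) * Real.exp (-1 * x^2) = |x|^m * Real.exp (-x^2)
    rw [abs_of_pos hx, Real.rpow_natCast]
    norm_num
  have h1 : Integrable (fun x : ℝ => |x| ^ m * Real.exp (-x^2)) := by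
    rw [← integrableOn_univ, ← @Set.Iio_union_Ici _ _ (0:ℝ), integrableOn_union,
      integrableOn_Ici_iff_integrableOn_Ioi]
    refine ⟨?_, hIoi⟩
    rw [← (Measure.measurePreserving_neg (volume : Measure ℝ)).integrableOn_comp_preimage
        (Homeomorph.neg ℝ).measurableEmbedding]
    simpa only [Function.comp_def, abs_neg, neg_sq, Set.neg_preimage, Set.neg_Iio, neg_zero]
      using hIoi
  have h0 : Integrable (fun x : ℝ => Real.exp (-x^2)) := by
    have := integrable_exp_neg_mul_sq (by norm_num : (0:ℝ) < 1)
    apply this.congr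
    filter_upwards with x
    norm_num
  have hint : Integrable (fun q : ℝ × ℝ =>
      (2:ℝ)^m * ((|q.1| ^ m * Real.exp (-q.1^2)) * Real.exp (-q.2^2)
        + Real.exp (-q.1^2) * (|q.2| ^ m * Real.exp (-q.2^2)))) := by
    apply Integrable.const_mul
    rw [Measure.volume_eq_prod]
    exact (h1.mul_prod h0).add (h0.mul_prod h1)
  apply hint.mono'
  · apply Continuous.aestronglyMeasurable
    simp only [Function.comp_def, Complex.measurableEquivRealProd_symm_apply,
      Complex.mk_eq_add_mul_I]
    fun_prop
  · filter_upwards with q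
    simp only [Function.comp_apply, Complex.measurableEquivRealProd_symm_apply,
      Complex.mk_eq_add_mul_I, norm_mul, norm_pow]
    rw [Complex.norm_exp]
    simp only [neg_re, ofReal_re, gauss_norm]
    have hxy : ‖(q.1:ℂ) + q.2 * I‖ ≤ |q.1| + |q.2| := by
      calc ‖(q.1:ℂ) + q.2 * I‖ ≤ ‖(q.1:ℂ)‖ + ‖(q.2:ℂ) * I‖ := norm_add_le _ _
      _ = |q.1| + |q.2| := by
        rw [norm_mul, Complex.norm_I, mul_one, Complex.norm_real, Complex.norm_real]
        rfl
    have hpow : ‖(q.1:ℂ) + q.2 * I‖ ^ m ≤ 2^m * (|q.1|^m + |q.2|^m) := by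
      calc ‖(q.1:ℂ) + q.2 * I‖ ^ m ≤ (|q.1| + |q.2|) ^ m :=
            pow_le_pow_left₀ (norm_nonneg _) hxy m
      _ ≤ (2 * max |q.1| |q.2|) ^ m := by
            apply pow_le_pow_left₀ (by positivity)
            rw [two_mul]
            exact add_le_add (le_max_left _ _) (le_max_right _ _)
      _ = 2^m * (max |q.1| |q.2|)^m := by rw [mul_pow]
      _ ≤ 2^m * (|q.1|^m + |q.2|^m) := by
            apply mul_le_mul_of_nonneg_left _ (by positivity)
            rcases max_cases |q.1| |q.2| with ⟨h, _⟩ | ⟨h, _⟩ <;> rw [h]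
            · exact le_add_of_nonneg_right (by positivity)
            · exact le_add_of_nonneg_left (by positivity)
    calc ‖(q.1:ℂ) + q.2 * I‖ ^ m * Real.exp (-(q.1^2 + q.2^2))
        ≤ (2^m * (|q.1|^m + |q.2|^m)) * Real.exp (-(q.1^2 + q.2^2)) := by
          exact mul_le_mul_of_nonneg_right hpow (Real.exp_nonneg _)
      _ = (2:ℝ)^m * ((|q.1| ^ m * Real.exp (-q.1^2)) * Real.exp (-q.2^2)
            + Real.exp (-q.1^2) * (|q.2| ^ m * Real.exp (-q.2^2))) := by
          rw [neg_add, Real.exp_add]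
          ring


lemma gauss_const : ∫ u : ℂ, Complex.exp (-((‖u‖^2 : ℝ) : ℂ)) = (Real.pi : ℂ) := by
  have := gauss_ab 0 0
  simpa using this

lemma poly_integral (p : Polynomial ℂ) (z : ℂ) :
    ∫ w : ℂ, p.eval w * Complex.exp (w * conj z + z * conj w - ((‖w‖^2 : ℝ) : ℂ))
      = (Real.pi : ℂ) * p.eval z * Complex.exp (z * conj z) := by
  rw [← integral_add_right_eq_self
    (fun w : ℂ => p.eval w * Complex.exp (w * conj z + z * conj w - ((‖w‖^2 : ℝ) : ℂ))) z]
  have key : ∀ u : ℂ,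
      p.eval (u + z) * Complex.exp ((u+z) * conj z + z * conj (u+z) - ((‖u+z‖^2 : ℝ) : ℂ))
        = Complex.exp (z * conj z) *
          ((p.comp (Polynomial.X + Polynomial.C z)).eval u * Complex.exp (-((‖u‖^2 : ℝ) : ℂ))) := by
    intro u
    rw [norm_sq_cast, norm_sq_cast]
    have he : (u+z) * conj z + z * conj (u+z) - (u+z) * conj (u+z)
        = z * conj z + -(u * conj u) := by
      simp only [map_add]
      ring
    rw [he, Complex.exp_add, Polynomial.eval_comp]
    simp only [Polynomial.eval_add, Polynomial.eval_X, Polynomial.eval_C]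
    ring
  simp_rw [key, integral_const_mul]
  set q := p.comp (Polynomial.X + Polynomial.C z) with hq
  have hev : ∀ u : ℂ, q.eval u * Complex.exp (-((‖u‖^2 : ℝ) : ℂ))
      = ∑ i ∈ Finset.range (q.natDegree + 1),
          q.coeff i * (u ^ i * Complex.exp (-((‖u‖^2 : ℝ) : ℂ))) := by
    intro u
    rw [Polynomial.eval_eq_sum_range, Finset.sum_mul]
    simp_rw [mul_assoc]
  simp_rw [hev]
  rw [integral_finset_sum _ (fun i _ => (integrable_moment i).const_mul _)]
  simp_rw [integral_const_mul]
  rw [Finset.sum_eq_single 0]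
  · rw [Polynomial.coeff_zero_eq_eval_zero]
    simp only [pow_zero, one_mul, gauss_const, hq, Polynomial.eval_comp,
      Polynomial.eval_add, Polynomial.eval_X, Polynomial.eval_C, zero_add]
    ring
  · intro i _ hi
    rw [moment_zero hi, mul_zero]
  · intro h
    exact absurd (Finset.mem_range.mpr (Nat.succ_pos _)) h


theorem stmt_18 (p : Polynomial ℂ) :
    ∀ z : ℂ × ℂ,
      Complex.exp (-((‖z.1‖ ^ 2 + ‖z.2‖ ^ 2 : ℝ) : ℂ)) * (((Real.pi : ℂ) ^ 2)⁻¹ *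
          ∫ w : ℂ × ℂ,
            (p.eval w.1 * Complex.exp (2 * Real.pi * Complex.I * w.2) *
                conj (Complex.exp w.2)) *
              Complex.exp (w.1 * conj z.1 + w.2 * conj z.2 + z.1 * conj w.1 +
                z.2 * conj w.2 - ((‖w.1‖ ^ 2 + ‖w.2‖ ^ 2 : ℝ) : ℂ)))
        = p.eval z.1 * Complex.exp (2 * Real.pi * Complex.I * z.2) *
            conj (Complex.exp z.2) := by
  intro z
  have hπ : (Real.pi : ℂ) ≠ 0 := by exact_mod_cast Real.pi_ne_zero
  have key : ∀ w : ℂ × ℂ,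
      (p.eval w.1 * Complex.exp (2 * Real.pi * Complex.I * w.2) *
          conj (Complex.exp w.2)) *
        Complex.exp (w.1 * conj z.1 + w.2 * conj z.2 + z.1 * conj w.1 +
          z.2 * conj w.2 - ((‖w.1‖ ^ 2 + ‖w.2‖ ^ 2 : ℝ) : ℂ))
      = (fun w1 : ℂ => p.eval w1 *
          Complex.exp (w1 * conj z.1 + z.1 * conj w1 - ((‖w1‖^2 : ℝ) : ℂ))) w.1 *
        (fun w2 : ℂ => Complex.exp ((2 * Real.pi * Complex.I + conj z.2) * w2 +
          (1 + z.2) * conj w2 - ((‖w2‖^2 : ℝ) : ℂ))) w.2 := by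
    intro w
    simp only
    rw [← Complex.exp_conj]
    simp only [mul_assoc, ← Complex.exp_add]
    congr 1
    push_cast
    ring
  simp_rw [key]
  rw [Measure.volume_eq_prod,
    integral_prod_mul
      (f := fun w1 : ℂ => p.eval w1 *
        Complex.exp (w1 * conj z.1 + z.1 * conj w1 - ((‖w1‖^2 : ℝ) : ℂ)))
      (g := fun w2 : ℂ => Complex.exp ((2 * Real.pi * Complex.I + conj z.2) * w2 +
        (1 + z.2) * conj w2 - ((‖w2‖^2 : ℝ) : ℂ))),
    poly_integral, gauss_ab]
  have hcast : ((((‖z.1‖ ^ 2 + ‖z.2‖ ^ 2 : ℝ)) : ℂ)) = z.1 * conj z.1 + z.2 * conj z.2 := by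
    rw [Complex.ofReal_add, norm_sq_cast, norm_sq_cast]
  rw [hcast, ← Complex.exp_conj]
  have hfield : ((Real.pi : ℂ) ^ 2)⁻¹ *
      ((Real.pi : ℂ) * p.eval z.1 * Complex.exp (z.1 * conj z.1) *
        ((Real.pi : ℂ) * Complex.exp ((2 * Real.pi * Complex.I + conj z.2) * (1 + z.2))))
      = p.eval z.1 * (Complex.exp (z.1 * conj z.1) *
          Complex.exp ((2 * Real.pi * Complex.I + conj z.2) * (1 + z.2))) := by
    field_simp
  rw [hfield]
  rw [show Complex.exp (-(z.1 * conj z.1 + z.2 * conj z.2)) *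
      (p.eval z.1 * (Complex.exp (z.1 * conj z.1) *
        Complex.exp ((2 * Real.pi * Complex.I + conj z.2) * (1 + z.2))))
      = p.eval z.1 * Complex.exp (-(z.1 * conj z.1 + z.2 * conj z.2) + (z.1 * conj z.1 +
          (2 * Real.pi * Complex.I + conj z.2) * (1 + z.2))) from by
    rw [Complex.exp_add, Complex.exp_add]; ring]
  have hexp : (-(z.1 * conj z.1 + z.2 * conj z.2) + (z.1 * conj z.1 +
      (2 * Real.pi * Complex.I + conj z.2) * (1 + z.2)))
      = 2 * Real.pi * Complex.I + (2 * Real.pi * Complex.I * z.2 + conj z.2) := by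
    ring
  rw [hexp, Complex.exp_add, Complex.exp_two_pi_mul_I, one_mul, Complex.exp_add]
  ring
end
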